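/- Let k be an algebraically closed field, Y a set of indeterminates with |k| > |Y|, and F ⊆ k[Y] a set of polynomials. Then the ideal of all polynomials vanishing on the common zero set of F in k^Y equals the radical of the ideal generated by F. -/

import Mathlib

open MvPolynomial

universe v

set_option maxHeartbeats 1000000 in
/-- Weak Nullstellensatz ingredient: over an algebraically closed field `k`, any maximal
ideal of a polynomial ring in infinitely many variables `Y` with `#Y < #k` is the ideal of
a point. -/
lemma auxMax_stmt3 {k Y : Type v} [Field k] [IsAlgClosed k] [Infinite Y]
    (hcard : Cardinal.mk Y < Cardinal.mk k) (m : Ideal (MvPolynomial Y k)) (hm : m.IsMaximal) :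
    ∃ x : Y → k, ∀ p ∈ m, MvPolynomial.eval x p = 0 := by
  letI : Ideal.IsMaximal m := hm
  letI : Field (MvPolynomial Y k ⧸ m) := Ideal.Quotient.field m
  have hrank : Module.rank k (MvPolynomial Y k ⧸ m) < Cardinal.mk k := by
    have h1 : Module.rank k (MvPolynomial Y k ⧸ m) ≤ Module.rank k (MvPolynomial Y k) :=
      LinearMap.rank_le_of_surjective (Ideal.Quotient.mkₐ k m).toLinearMap
        Ideal.Quotient.mk_surjective
    have h2 : Module.rank k (MvPolynomial Y k) = Cardinal.mk (Y →₀ ℕ) := MvPolynomial.rank_eq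
    have h3 : Cardinal.mk (Y →₀ ℕ) = max (Cardinal.mk Y) Cardinal.aleph0 :=
      Cardinal.mk_finsupp_nat Y
    have h4 : Cardinal.aleph0 ≤ Cardinal.mk Y := Cardinal.infinite_iff.mp ‹Infinite Y›
    calc Module.rank k (MvPolynomial Y k ⧸ m) ≤ Cardinal.mk (Y →₀ ℕ) := h2 ▸ h1
      _ = Cardinal.mk Y := by rw [h3, max_eq_left h4]
      _ < Cardinal.mk k := hcard
  haveI halg : Algebra.IsAlgebraic k (MvPolynomial Y k ⧸ m) := by
    constructor
    intro t
    by_contra ht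
    have ht' : Transcendental k t := ht
    have hli := ht'.linearIndependent_sub_inv
    exact absurd (hli.cardinal_le_rank.trans_lt hrank) (lt_irrefl _)
  have hsurj : Function.Surjective (algebraMap k (MvPolynomial Y k ⧸ m)) :=
    IsAlgClosed.algebraMap_bijective_of_isIntegral.2
  let e : k ≃+* (MvPolynomial Y k ⧸ m) :=
    RingEquiv.ofBijective (algebraMap k (MvPolynomial Y k ⧸ m))
      ⟨(algebraMap k (MvPolynomial Y k ⧸ m)).injective, hsurj⟩
  refine ⟨fun s => e.symm (Ideal.Quotient.mk m (X s)), fun p hp => ?_⟩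
  have key : (MvPolynomial.eval (fun s => e.symm (Ideal.Quotient.mk m (X s))) :
      MvPolynomial Y k →+* k) = (e.symm : (MvPolynomial Y k ⧸ m) →+* k).comp
        (Ideal.Quotient.mk m) := by
    apply MvPolynomial.ringHom_ext
    · intro a
      have hCa : Ideal.Quotient.mk m (C a) = algebraMap k (MvPolynomial Y k ⧸ m) a := by
        rw [IsScalarTower.algebraMap_apply k (MvPolynomial Y k) (MvPolynomial Y k ⧸ m) a,
          Ideal.Quotient.algebraMap_eq, MvPolynomial.algebraMap_eq]
      simp only [RingHom.comp_apply, eval_C, hCa]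
      exact (e.symm_apply_apply a).symm
    · intro s
      simp
  have hev : MvPolynomial.eval (fun s => e.symm (Ideal.Quotient.mk m (X s))) p
      = e.symm (Ideal.Quotient.mk m p) :=
    congrFun (congrArg (fun (f : MvPolynomial Y k →+* k) => (f : MvPolynomial Y k → k)) key) p
  rw [hev, Ideal.Quotient.eq_zero_iff_mem.mpr hp, map_zero]

set_option maxHeartbeats 1000000 in
set_option synthInstance.maxHeartbeats 400000 in
/-- Rabinowitsch trick: a polynomial vanishing on `V(F)` lies in every prime containing `F`. -/
lemma auxPrime_stmt3 {k Y : Type v} [Field k] [IsAlgClosed k] [Infinite Y]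
    (hcard : Cardinal.mk Y < Cardinal.mk k) (F : Set (MvPolynomial Y k))
    (f : MvPolynomial Y k)
    (hf : ∀ y : Y → k, (∀ g ∈ F, MvPolynomial.eval y g = 0) → MvPolynomial.eval y f = 0)
    (P : Ideal (MvPolynomial Y k)) (hP : P.IsPrime) (hPF : Ideal.span F ≤ P) : f ∈ P := by
  by_contra hfP
  letI : Ideal.IsPrime P := hP
  let π : MvPolynomial Y k →+* FractionRing (MvPolynomial Y k ⧸ P) :=
    (algebraMap (MvPolynomial Y k ⧸ P) (FractionRing (MvPolynomial Y k ⧸ P))).comp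
      (Ideal.Quotient.mk P)
  have hπf : π f ≠ 0 := by
    intro h
    rw [RingHom.comp_apply, IsFractionRing.to_map_eq_zero_iff,
      Ideal.Quotient.eq_zero_iff_mem] at h
    exact hfP h
  let g : Option Y → FractionRing (MvPolynomial Y k ⧸ P) :=
    fun o => o.elim (π f)⁻¹ (fun y => π (X y))
  let ψ : MvPolynomial (Option Y) k →+* FractionRing (MvPolynomial Y k ⧸ P) :=
    eval₂Hom (π.comp C) g
  have hid : MvPolynomial.eval₂Hom (π.comp C) (fun y => π (MvPolynomial.X y)) = π := by
    apply MvPolynomial.ringHom_ext <;> intro <;> simp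
  have hψren : ∀ p : MvPolynomial Y k, ψ (rename some p) = π p := by
    intro p
    show eval₂ (π.comp C) g (rename some p) = π p
    rw [eval₂_rename]
    have hgs : g ∘ some = fun y => π (X y) := funext fun y => rfl
    rw [hgs, ← coe_eval₂Hom, hid]
  have hJ : Ideal.span ((rename (R := k) some '' F) ∪ {1 - X none * rename some f}) = ⊤ := by
    by_contra hJ
    have hcard' : Cardinal.mk (Option Y) < Cardinal.mk k := by
      rw [Cardinal.mk_option,
        Cardinal.add_one_eq (Cardinal.infinite_iff.mp ‹Infinite Y›)]
      exact hcard
    obtain ⟨m, hm, hJm⟩ := Ideal.exists_le_maximal _ hJ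
    obtain ⟨x, hx⟩ := auxMax_stmt3 hcard' m hm
    have hy : ∀ g ∈ F, MvPolynomial.eval (x ∘ some) g = 0 := fun g hg => by
      rw [← eval_rename]
      exact hx _ (hJm (Ideal.subset_span (Or.inl ⟨g, hg, rfl⟩)))
    have hfy := hf (x ∘ some) hy
    have hbad := hx _ (hJm (Ideal.subset_span (Or.inr rfl)))
    rw [map_sub, map_mul, map_one, eval_rename, hfy, mul_zero, sub_zero] at hbad
    exact one_ne_zero hbad
  have h1 : (1 : MvPolynomial (Option Y) k) ∈
      Ideal.span ((rename (R := k) some '' F) ∪ {1 - X none * rename some f}) :=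
    hJ ▸ Submodule.mem_top
  have h2 : (1 : FractionRing (MvPolynomial Y k ⧸ P)) ∈
      Ideal.map ψ (Ideal.span ((rename (R := k) some '' F) ∪ {1 - X none * rename some f})) := by
    simpa using Ideal.mem_map_of_mem ψ h1
  rw [Ideal.map_span] at h2
  have h3 : Ideal.span (ψ '' ((rename (R := k) some '' F) ∪ {1 - X none * rename some f})) ≤ ⊥ := by
    rw [Ideal.span_le]
    rintro z ⟨p, hp, rfl⟩
    rcases hp with ⟨q, hq, rfl⟩ | hp
    · rw [SetLike.mem_coe, Ideal.mem_bot, hψren]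
      show π q = 0
      rw [RingHom.comp_apply, Ideal.Quotient.eq_zero_iff_mem.mpr (hPF (Ideal.subset_span hq)),
        map_zero]
    · rw [Set.mem_singleton_iff] at hp
      subst hp
      rw [SetLike.mem_coe, Ideal.mem_bot, map_sub, map_mul, map_one, hψren]
      have hX : ψ (X none) = (π f)⁻¹ := by
        show eval₂ (π.comp C) g (X none) = (π f)⁻¹
        rw [eval₂_X]
        rfl
      rw [hX, inv_mul_cancel₀ hπf, sub_self]
  exact absurd (Ideal.mem_bot.mp (h3 h2)) one_ne_zero

/-- Strong Nullstellensatz in possibly infinitely many variables (Lang):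
for an algebraically closed field `k` and a set of variables `Y` with `|Y| < |k|`,
and any set `F ⊆ k[Y]`, we have `I(V(F)) = √(span F)`. -/
theorem stmt3.{u} (k : Type u) [Field k] [IsAlgClosed k] (Y : Type u)
    (hcard : Cardinal.mk Y < Cardinal.mk k) (F : Set (MvPolynomial Y k)) :
    {f : MvPolynomial Y k | ∀ y : Y → k, (∀ g ∈ F, MvPolynomial.eval y g = 0) →
        MvPolynomial.eval y f = 0} = ↑(Ideal.span F).radical := by
  apply Set.eq_of_subset_of_subset
  · intro f hf
    show f ∈ (Ideal.span F).radical
    cases finite_or_infinite Y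
    · rw [← MvPolynomial.vanishingIdeal_zeroLocus_eq_radical (K := k) (Ideal.span F)]
      intro x hx
      exact hf x fun g hg => hx g (Ideal.subset_span hg)
    · rw [Ideal.radical_eq_sInf]
      refine Ideal.mem_sInf.mpr ?_
      rintro P ⟨hPF, hP⟩
      exact auxPrime_stmt3 hcard F f hf P hP hPF
  · intro f hf y hy
    have h1 : f ∈ MvPolynomial.vanishingIdeal k (MvPolynomial.zeroLocus k (Ideal.span F)) :=
      MvPolynomial.radical_le_vanishingIdeal_zeroLocus (K := k) (Ideal.span F) hf
    refine h1 y fun p hp => ?_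
    have hy' : y ∈ MvPolynomial.zeroLocus k (Ideal.span F) := by
      rw [MvPolynomial.zeroLocus_span]
      exact hy
    exact hy' p hp
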